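/- Let ε ∈ [0,1) and let k ≥ 1 be an integer. For every fixed (δ₁,…,δ_{k−1}) ∈ [0,1]^{k−1}: (i) the partial derivative ∂R_ε/∂δ₀ (δ₀, δ₁,…,δ_{k−1}) tends to +∞ as δ₀ → 0⁺; and (ii) ∂R_ε/∂δ₀ evaluated at δ₀ = 1/2 is strictly negative. -/

import Mathlib

/-- The binary entropy function (base 2), with `H2 0 = H2 1 = 0`. -/
noncomputable def H2 (x : ℝ) : ℝ := -(x * Real.logb 2 x) - (1 - x) * Real.logb 2 (1 - x)

/-- The function `R_ε(δ₀,…,δ_{k−1})`. -/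
noncomputable def Rfun (ε : ℝ) (k : ℕ) (δ : ℕ → ℝ) : ℝ :=
  (∑ i ∈ Finset.range k, (1 - ε) ^ (i + 1) * H2 (δ i) * ∏ m ∈ Finset.range i, δ m) /
  (1 + ∑ i ∈ Finset.range k, (1 - ε) ^ (i + 1) * ∏ m ∈ Finset.range (i + 1), δ m)

lemma H2_eq (x : ℝ) : H2 x = Real.binEntropy x / Real.log 2 := by
  unfold H2 Real.binEntropy Real.logb
  rw [Real.log_inv, Real.log_inv]
  ring

lemma H2_eq' : H2 = fun x => Real.binEntropy x / Real.log 2 := funext H2_eq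

lemma H2_zero : H2 0 = 0 := by simp [H2]

lemma H2_half : H2 (1 / 2) = 1 := by
  rw [H2_eq]
  have h2 : ((1 : ℝ) / 2) = 2⁻¹ := by norm_num
  rw [h2, Real.binEntropy_two_inv]
  exact div_self (Real.log_ne_zero_of_pos_of_ne_one two_pos (by norm_num))

lemma H2_nonneg {x : ℝ} (h0 : 0 ≤ x) (h1 : x ≤ 1) : 0 ≤ H2 x := by
  rw [H2_eq]
  exact div_nonneg (Real.binEntropy_nonneg h0 h1) (Real.log_nonneg one_le_two)

lemma H2_le_one (x : ℝ) : H2 x ≤ 1 := by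
  rw [H2_eq, div_le_one (Real.log_pos one_lt_two)]
  exact Real.binEntropy_le_log_two

lemma H2_continuous : Continuous H2 := by
  rw [H2_eq']
  exact Real.binEntropy_continuous.div_const _

lemma hasDerivAt_H2 {x : ℝ} (h0 : x ≠ 0) (h1 : x ≠ 1) :
    HasDerivAt H2 ((Real.log (1 - x) - Real.log x) / Real.log 2) x := by
  rw [H2_eq']
  exact (Real.hasDerivAt_binEntropy h0 h1).div_const _

/-- Let `ε ∈ [0,1)` and `k ≥ 1`.  For every fixed `(δ₁,…,δ_{k−1}) ∈ [0,1]^{k−1}`: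
(i) `∂R_ε/∂δ₀` tends to `+∞` as `δ₀ → 0⁺`; and
(ii) `∂R_ε/∂δ₀` evaluated at `δ₀ = 1/2` is strictly negative. -/
theorem first_partial_limits
    (ε : ℝ) (hε : ε ∈ Set.Ico (0 : ℝ) 1) (k : ℕ) (hk : 1 ≤ k)
    (δ : ℕ → ℝ) (hδ : ∀ i, 1 ≤ i → i < k → δ i ∈ Set.Icc (0 : ℝ) 1) :
    Filter.Tendsto (fun t : ℝ => deriv (fun s : ℝ => Rfun ε k (Function.update δ 0 s)) t)
      (nhdsWithin 0 (Set.Ioi 0)) Filter.atTop ∧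
    deriv (fun s : ℝ => Rfun ε k (Function.update δ 0 s)) (1 / 2) < 0 := by
  classical
  obtain ⟨hε0, hε1⟩ := hε
  obtain ⟨k', rfl⟩ : ∃ k', k = k' + 1 := ⟨k - 1, (Nat.succ_pred_eq_of_pos hk).symm⟩
  obtain ⟨e, he⟩ : ∃ e : ℝ, e = 1 - ε := ⟨_, rfl⟩
  have he0 : 0 < e := by rw [he]; linarith
  obtain ⟨Q, hQ⟩ : ∃ Q : ℕ → ℝ, Q = fun i => ∏ m ∈ Finset.range i, δ (m + 1) := ⟨_, rfl⟩
  have hδ' : ∀ i < k', δ (i + 1) ∈ Set.Icc (0 : ℝ) 1 := fun i hi =>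
    hδ (i + 1) (Nat.le_add_left 1 i) (by omega)
  have hQnn : ∀ i ≤ k', 0 ≤ Q i := by
    intro i hi
    rw [hQ]
    refine Finset.prod_nonneg fun m hm => ?_
    exact (hδ' m (lt_of_lt_of_le (Finset.mem_range.mp hm) hi)).1
  obtain ⟨A, hA⟩ : ∃ A : ℝ,
      A = ∑ i ∈ Finset.range k', e ^ (i + 2) * H2 (δ (i + 1)) * Q i := ⟨_, rfl⟩
  obtain ⟨B, hB⟩ : ∃ B : ℝ,
      B = ∑ i ∈ Finset.range (k' + 1), e ^ (i + 1) * Q i := ⟨_, rfl⟩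
  have hB0 : 0 ≤ B := by
    rw [hB]
    apply Finset.sum_nonneg
    intro i hi
    exact mul_nonneg (pow_nonneg he0.le _) (hQnn i (Nat.lt_succ_iff.mp (Finset.mem_range.mp hi)))
  -- Rewriting the function of s as a simple rational function.
  have hfun : (fun s : ℝ => Rfun ε (k' + 1) (Function.update δ 0 s))
      = fun s => (e * H2 s + A * s) / (1 + B * s) := by
    funext s
    unfold Rfun
    rw [← he]
    have hu0 : Function.update δ 0 s 0 = s := Function.update_self 0 s δ
    have hus : ∀ m : ℕ, Function.update δ 0 s (m + 1) = δ (m + 1) :=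
      fun m => Function.update_of_ne (Nat.succ_ne_zero m) s δ
    congr 1
    · rw [Finset.sum_range_succ', hA, hQ, Finset.sum_mul]
      simp only [hu0, hus, Finset.prod_range_succ', Finset.prod_range_zero,
        zero_add, pow_one, one_mul, mul_one]
      rw [add_comm]
      congr 1
      exact Finset.sum_congr rfl fun i _ => by ring
    · rw [hB, hQ, Finset.sum_mul]
      congr 1
      refine Finset.sum_congr rfl fun i hi => ?_
      rw [Finset.prod_range_succ']
      simp only [hu0, hus]
      ring
  -- The key inequality A < e * B.
  have hle : ∀ i ∈ Finset.range k', e ^ (i + 2) * H2 (δ (i + 1)) * Q i ≤ e * (e ^ (i + 1) * Q i) := by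
    intro i hi
    have hi' := Finset.mem_range.mp hi
    have hQi : 0 ≤ Q i := hQnn i (by omega)
    have := mul_le_mul_of_nonneg_right (H2_le_one (δ (i + 1))) hQi
    calc e ^ (i + 2) * H2 (δ (i + 1)) * Q i
        = e ^ (i + 2) * (H2 (δ (i + 1)) * Q i) := by ring
      _ ≤ e ^ (i + 2) * (1 * Q i) := by
          exact mul_le_mul_of_nonneg_left this (pow_nonneg he0.le _)
      _ = e * (e ^ (i + 1) * Q i) := by ring
  have hABlt : A < e * B := by
    rw [hB, Finset.mul_sum, Finset.sum_range_succ]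
    have hlast : 0 ≤ e * (e ^ (k' + 1) * Q k') :=
      mul_nonneg he0.le (mul_nonneg (pow_nonneg he0.le _) (hQnn k' le_rfl))
    by_cases hP : ∃ i ∈ Finset.range k', δ (i + 1) = 0
    · -- strict inequality at the first zero index
      obtain ⟨i, hi, hi0⟩ := hP
      have hex : ∃ j, δ (j + 1) = 0 := ⟨i, hi0⟩
      set j := Nat.find hex with hj
      have hj0 : δ (j + 1) = 0 := Nat.find_spec hex
      have hjle : j ≤ i := Nat.find_min' hex hi0
      have hjmem : j ∈ Finset.range k' := Finset.mem_range.mpr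
        (lt_of_le_of_lt hjle (Finset.mem_range.mp hi))
      have hQj : 0 < Q j := by
        rw [hQ]
        apply Finset.prod_pos
        intro m hm
        have hm' := Finset.mem_range.mp hm
        have hne : δ (m + 1) ≠ 0 := Nat.find_min hex hm'
        have hnn : 0 ≤ δ (m + 1) :=
          (hδ' m (lt_of_lt_of_le hm' (le_of_lt (lt_of_le_of_lt hjle
            (Finset.mem_range.mp hi))))).1
        exact lt_of_le_of_ne hnn (Ne.symm hne)
      have hstrict : A < ∑ i ∈ Finset.range k', e * (e ^ (i + 1) * Q i) := by
        rw [hA]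
        apply Finset.sum_lt_sum hle
        refine ⟨j, hjmem, ?_⟩
        rw [hj0, H2_zero]
        simp only [mul_zero, zero_mul]
        positivity
      linarith
    · push_neg at hP
      have hQk : 0 < Q k' := by
        rw [hQ]
        apply Finset.prod_pos
        intro m hm
        have hm' := Finset.mem_range.mp hm
        exact lt_of_le_of_ne ((hδ' m hm').1) (Ne.symm (hP m (Finset.mem_range.mpr hm')))
      have hApos : A ≤ ∑ i ∈ Finset.range k', e * (e ^ (i + 1) * Q i) := by
        rw [hA]; exact Finset.sum_le_sum hle
      have : 0 < e * (e ^ (k' + 1) * Q k') :=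
        mul_pos he0 (mul_pos (pow_pos he0 _) hQk)
      linarith
  rw [hfun]
  -- derivative formula
  have hderiv : ∀ t : ℝ, t ≠ 0 → t ≠ 1 → 0 ≤ t →
      HasDerivAt (fun s => (e * H2 s + A * s) / (1 + B * s))
        (((e * ((Real.log (1 - t) - Real.log t) / Real.log 2) + A) * (1 + B * t)
          - (e * H2 t + A * t) * B) / (1 + B * t) ^ 2) t := by
    intro t ht0 ht1 htnn
    have hd : (0 : ℝ) < 1 + B * t := by
      have : 0 ≤ B * t := mul_nonneg hB0 htnn
      linarith
    have h1 : HasDerivAt (fun s : ℝ => e * H2 s + A * s)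
        (e * ((Real.log (1 - t) - Real.log t) / Real.log 2) + A) t := by
      have := ((hasDerivAt_H2 ht0 ht1).const_mul e).add ((hasDerivAt_id t).const_mul A)
      rw [mul_one] at this
      exact this
    have h2 : HasDerivAt (fun s : ℝ => 1 + B * s) B t := by
      simpa using ((hasDerivAt_id t).const_mul B).const_add (1 : ℝ)
    exact h1.div h2 hd.ne'
  constructor
  · -- part (i): tendsto atTop
    set G : ℝ → ℝ := fun t =>
      (1 + B * t)⁻¹ * (e * ((Real.log (1 - t) - Real.log t) / Real.log 2))
        + (A * (1 + B * t) - (e * H2 t + A * t) * B) / (1 + B * t) ^ 2 with hG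
    have hIoo : Set.Ioo (0 : ℝ) 1 ∈ nhdsWithin (0 : ℝ) (Set.Ioi 0) := by
      rw [← Set.Ioi_inter_Iio]
      exact Filter.inter_mem self_mem_nhdsWithin
        (mem_nhdsWithin_of_mem_nhds (Iio_mem_nhds one_pos))
    have heq : ∀ᶠ t in nhdsWithin (0 : ℝ) (Set.Ioi 0),
        deriv (fun s => (e * H2 s + A * s) / (1 + B * s)) t = G t := by
      filter_upwards [hIoo] with t ht
      obtain ⟨ht0, ht1⟩ := ht
      rw [(hderiv t ht0.ne' ht1.ne ht0.le).deriv, hG]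
      have hd : (0 : ℝ) < 1 + B * t := by
        have : 0 ≤ B * t := mul_nonneg hB0 ht0.le
        linarith
      field_simp
      ring
    rw [Filter.tendsto_congr' heq]
    have hT1 : Filter.Tendsto (fun t : ℝ => Real.log (1 - t) - Real.log t)
        (nhdsWithin (0 : ℝ) (Set.Ioi 0)) Filter.atTop := by
      have hlog1 : Filter.Tendsto (fun t : ℝ => Real.log (1 - t))
          (nhdsWithin (0 : ℝ) (Set.Ioi 0)) (nhds 0) := by
        have hc : ContinuousAt (fun t : ℝ => Real.log (1 - t)) 0 :=
          (Real.continuousAt_log (by norm_num)).comp (by fun_prop)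
        have := hc.tendsto.mono_left (nhdsWithin_le_nhds (s := Set.Ioi (0:ℝ)))
        simpa using this
      have hlog2 : Filter.Tendsto (fun t : ℝ => -Real.log t)
          (nhdsWithin (0 : ℝ) (Set.Ioi 0)) Filter.atTop := by
        rw [← Filter.tendsto_neg_atBot_iff]
        simpa using Real.tendsto_log_nhdsGT_zero
      simpa [sub_eq_add_neg] using hlog1.add_atTop hlog2
    have hT2 : Filter.Tendsto (fun t : ℝ => e * ((Real.log (1 - t) - Real.log t) / Real.log 2))
        (nhdsWithin (0 : ℝ) (Set.Ioi 0)) Filter.atTop :=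
      (hT1.atTop_div_const (Real.log_pos one_lt_two)).const_mul_atTop he0
    have hTinv : Filter.Tendsto (fun t : ℝ => (1 + B * t)⁻¹)
        (nhdsWithin (0 : ℝ) (Set.Ioi 0)) (nhds 1) := by
      have hc : ContinuousAt (fun t : ℝ => (1 + B * t)⁻¹) 0 := by
        apply ContinuousAt.inv₀ (by fun_prop)
        norm_num
      have := hc.tendsto.mono_left (nhdsWithin_le_nhds (s := Set.Ioi (0:ℝ)))
      simpa using this
    have hT3 : Filter.Tendsto
        (fun t : ℝ => (1 + B * t)⁻¹ * (e * ((Real.log (1 - t) - Real.log t) / Real.log 2)))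
        (nhdsWithin (0 : ℝ) (Set.Ioi 0)) Filter.atTop :=
      hTinv.pos_mul_atTop one_pos hT2
    have hT4 : Filter.Tendsto
        (fun t : ℝ => (A * (1 + B * t) - (e * H2 t + A * t) * B) / (1 + B * t) ^ 2)
        (nhdsWithin (0 : ℝ) (Set.Ioi 0))
        (nhds ((A * (1 + B * 0) - (e * H2 0 + A * 0) * B) / (1 + B * 0) ^ 2)) := by
      have hc : ContinuousAt
          (fun t : ℝ => (A * (1 + B * t) - (e * H2 t + A * t) * B) / (1 + B * t) ^ 2) 0 := by
        apply ContinuousAt.div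
        · exact ((continuousAt_const.mul (by fun_prop)).sub
            (((continuousAt_const.mul (H2_continuous.continuousAt)).add
              (continuousAt_const.mul continuousAt_id)).mul continuousAt_const))
        · fun_prop
        · norm_num
      exact hc.tendsto.mono_left (nhdsWithin_le_nhds (s := Set.Ioi (0:ℝ)))
    exact hT3.atTop_add hT4
  · -- part (ii): derivative at 1/2 is negative
    have h12 : (1 / 2 : ℝ) ≠ 0 := by norm_num
    have h12' : (1 / 2 : ℝ) ≠ 1 := by norm_num
    rw [(hderiv (1 / 2) h12 h12' (by norm_num)).deriv]
    have hnum : (e * ((Real.log (1 - 1 / 2) - Real.log (1 / 2)) / Real.log 2) + A)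
          * (1 + B * (1 / 2)) - (e * H2 (1 / 2) + A * (1 / 2)) * B
        = A - e * B := by
      rw [H2_half]
      norm_num
      ring
    rw [hnum]
    apply div_neg_of_neg_of_pos
    · linarith
    · have : (0 : ℝ) < 1 + B * (1 / 2) := by nlinarith
      positivity
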